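/- Let d ≥ 1 and let ρ : ℕ → ℕ satisfy ρ(ℓ) = O(ℓ) as ℓ → ∞. For every δ > 0 there exists ε > 0 such that: (i) every ε-random subset S of ℤ^d is almost surely ρ-sparse; and (ii) for every ε-random set S and each cell k ∈ ℤ^d, there is (almost surely, on the event that S is ρ-sparse) a partition of S into ρ-islands witnessing sparseness such that the probability that k lies in the ρ-territory of some island of this partition is less than δ. -/

import Mathlib

open MeasureTheory

/-- The diameter of a set `S ⊆ ℤ^d`: the least `m` with `S ⊆ i + [0,m)^d`. -/
noncomputable def diamd {d : ℕ} (S : Set (Fin d → ℤ)) : ℕ :=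
  sInf {m : ℕ | ∃ i : Fin d → ℤ, ∀ a ∈ S, ∀ j, i j ≤ a j ∧ a j < i j + (m : ℤ)}

/-- The `ρ`-territory of a finite set `A`: all cells within `ℓ^∞` distance
`ρ(diam A)` of `A` (i.e. `A + M + ⋯ + M` with `ρ(diam A)` copies of the Moore
neighbourhood `M`). -/
noncomputable def territory {d : ℕ} (ρ : ℕ → ℕ) (A : Set (Fin d → ℤ)) :
    Set (Fin d → ℤ) :=
  {c | ∃ a ∈ A, ∀ j, |c j - a j| ≤ (ρ (diamd A) : ℤ)}

/-- `C` is a partition of `S` into `ρ`-islands witnessing `ρ`-sparseness: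
the parts are finite, nonempty, pairwise disjoint, their union is `S`, any two
distinct islands are well separated, and every cell lies in the territory of
only finitely many islands. -/
def IsIslandPartition {d : ℕ} (ρ : ℕ → ℕ) (C : Set (Set (Fin d → ℤ)))
    (S : Set (Fin d → ℤ)) : Prop :=
  (∀ A ∈ C, A.Finite ∧ A.Nonempty) ∧
  C.PairwiseDisjoint id ∧
  ⋃₀ C = S ∧
  (∀ A ∈ C, ∀ B ∈ C, A ≠ B →
    A ∩ territory ρ B = ∅ ∨ territory ρ A ∩ B = ∅) ∧
  (∀ k : Fin d → ℤ, {A ∈ C | k ∈ territory ρ A}.Finite)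

/-- `S` is `ρ`-sparse. -/
def Sparse {d : ℕ} (ρ : ℕ → ℕ) (S : Set (Fin d → ℤ)) : Prop :=
  ∃ C, IsIslandPartition ρ C S

open scoped ENNReal

namespace DRS

variable {d : ℕ}

/-- ℓ^∞ distance on `ℤ^d`. -/
def nd {d : ℕ} (x y : Fin d → ℤ) : ℕ := Finset.univ.sup fun j => (x j - y j).natAbs

lemma nd_le_iff {x y : Fin d → ℤ} {r : ℕ} : nd x y ≤ r ↔ ∀ j, (x j - y j).natAbs ≤ r := by
  simp [nd, Finset.sup_le_iff]

lemma coord_le_nd (x y : Fin d → ℤ) (j : Fin d) : (x j - y j).natAbs ≤ nd x y :=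
  Finset.le_sup (f := fun j => (x j - y j).natAbs) (Finset.mem_univ j)

lemma nd_self (x : Fin d → ℤ) : nd x x = 0 := by simp [nd]

lemma nd_symm (x y : Fin d → ℤ) : nd x y = nd y x := by
  unfold nd; congr 1; funext j
  rw [← Int.natAbs_neg]; ring_nf

lemma nd_triangle (x y z : Fin d → ℤ) : nd x z ≤ nd x y + nd y z := by
  rw [nd_le_iff]
  intro j
  calc (x j - z j).natAbs = ((x j - y j) + (y j - z j)).natAbs := by ring_nf
    _ ≤ (x j - y j).natAbs + (y j - z j).natAbs := Int.natAbs_add_le _ _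
    _ ≤ nd x y + nd y z := Nat.add_le_add (coord_le_nd x y j) (coord_le_nd y z j)

end DRS

namespace DRS

variable {d : ℕ}

/-- Parameters. -/
def Kc (c₀ : ℕ) : ℕ := c₀ + 1
def Lam (c₀ : ℕ) : ℕ := 64 * (c₀ + 1)
def av (c₀ n : ℕ) : ℕ := Lam c₀ ^ n
def bv (c₀ n : ℕ) : ℕ := 4 * Kc c₀ * av c₀ n

lemma one_le_Kc (c₀ : ℕ) : 1 ≤ Kc c₀ := Nat.succ_le_succ (Nat.zero_le _)
lemma two_le_Lam (c₀ : ℕ) : 2 ≤ Lam c₀ := by unfold Lam; nlinarith [Nat.zero_le c₀]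
lemma one_le_av (c₀ n : ℕ) : 1 ≤ av c₀ n := Nat.one_le_pow _ _ (by have := two_le_Lam c₀; omega)
lemma av_succ (c₀ n : ℕ) : av c₀ (n+1) = Lam c₀ * av c₀ n := by rw [av, pow_succ, mul_comm]; rfl
lemma av_mono {c₀ m n : ℕ} (h : m ≤ n) : av c₀ m ≤ av c₀ n :=
  Nat.pow_le_pow_right (by have := two_le_Lam c₀; omega) h
lemma two_le_av_succ (c₀ n : ℕ) : 2 ≤ av c₀ (n+1) := by
  calc 2 ≤ Lam c₀ := two_le_Lam c₀
  _ = av c₀ 1 := (pow_one _).symm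
  _ ≤ av c₀ (n+1) := av_mono (by omega)

/-- Reachability within `s` by steps of `ℓ^∞` length `≤ b`. -/
def Reach (s : Set (Fin d → ℤ)) (b : ℕ) : (Fin d → ℤ) → (Fin d → ℤ) → Prop :=
  Relation.ReflTransGen fun u v => u ∈ s ∧ v ∈ s ∧ nd u v ≤ b

lemma Reach.symmetric {s : Set (Fin d → ℤ)} {b : ℕ} : Symmetric (Reach s b) :=
  fun x y h => (@Relation.ReflTransGen.stdSymm _ (fun u v => u ∈ s ∧ v ∈ s ∧ nd u v ≤ b)
    ⟨fun u v ⟨hu, hv, hn⟩ => ⟨hv, hu, by rwa [nd_symm]⟩⟩).symm x y h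

lemma Reach.mem_of_mem {s : Set (Fin d → ℤ)} {b : ℕ} {x y : Fin d → ℤ}
    (h : Reach s b x y) (hx : x ∈ s) : y ∈ s := by
  induction h with
  | refl => exact hx
  | tail _ h2 _ => exact h2.2.1

/-- Connected component of `x` in `s` for the `b`-step graph. -/
def comp (s : Set (Fin d → ℤ)) (b : ℕ) (x : Fin d → ℤ) : Set (Fin d → ℤ) :=
  {y | x ∈ s ∧ Reach s b x y}

lemma comp_subset (s : Set (Fin d → ℤ)) (b : ℕ) (x : Fin d → ℤ) : comp s b x ⊆ s :=
  fun _ ⟨hx, hr⟩ => hr.mem_of_mem hx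

lemma mem_comp_self {s : Set (Fin d → ℤ)} {b : ℕ} {x : Fin d → ℤ} (hx : x ∈ s) :
    x ∈ comp s b x := ⟨hx, Relation.ReflTransGen.refl⟩

lemma comp_eq_of_mem {s : Set (Fin d → ℤ)} {b : ℕ} {x y : Fin d → ℤ}
    (hy : y ∈ comp s b x) : comp s b y = comp s b x := by
  obtain ⟨hx, hxy⟩ := hy
  have hy' : y ∈ s := hxy.mem_of_mem hx
  ext z
  constructor
  · rintro ⟨-, hyz⟩; exact ⟨hx, hxy.trans hyz⟩
  · rintro ⟨-, hxz⟩; exact ⟨hy', (Reach.symmetric hxy).trans hxz⟩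

lemma mem_comp_of_edge {s : Set (Fin d → ℤ)} {b : ℕ} {x y u : Fin d → ℤ}
    (hy : y ∈ comp s b x) (hu : u ∈ s) (hn : nd u y ≤ b) : u ∈ comp s b x := by
  obtain ⟨hx, hxy⟩ := hy
  exact ⟨hx, hxy.tail ⟨hxy.mem_of_mem hx, hu, by rwa [nd_symm]⟩⟩

/-- `x`'s component at rank `n` has small diameter. -/
def small (c₀ : ℕ) (s : Set (Fin d → ℤ)) (n : ℕ) (x : Fin d → ℤ) : Prop :=
  ∀ y ∈ comp s (bv c₀ n) x, ∀ z ∈ comp s (bv c₀ n) x, nd y z ≤ av c₀ n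

lemma small_congr {c₀ n : ℕ} {s : Set (Fin d → ℤ)} {x y : Fin d → ℤ}
    (hy : y ∈ comp s (bv c₀ n) x) : small c₀ s n y ↔ small c₀ s n x := by
  unfold small; rw [comp_eq_of_mem hy]

/-- Survivors after `n` rounds of island removal. -/
def Slev (c₀ : ℕ) (S₀ : Set (Fin d → ℤ)) : ℕ → Set (Fin d → ℤ)
  | 0 => S₀
  | n+1 => {x ∈ Slev c₀ S₀ n | ¬ small c₀ (Slev c₀ S₀ n) (n+1) x}

lemma Slev_antitone (c₀ : ℕ) (S₀ : Set (Fin d → ℤ)) : ∀ {m n : ℕ}, m ≤ n →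
    Slev c₀ S₀ n ⊆ Slev c₀ S₀ m := by
  intro m n h
  induction n with
  | zero => cases Nat.le_zero.mp h; exact fun _ h => h
  | succ n ih =>
    rcases Nat.eq_or_lt_of_le h with rfl | h'
    · exact fun _ h => h
    · exact fun x hx => ih (by omega) hx.1

/-- The islands. -/
def island (c₀ : ℕ) (S₀ : Set (Fin d → ℤ)) (A : Set (Fin d → ℤ)) : Prop :=
  ∃ n x, x ∈ Slev c₀ S₀ n ∧ small c₀ (Slev c₀ S₀ n) (n+1) x ∧
    A = comp (Slev c₀ S₀ n) (bv c₀ (n+1)) x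

/-- The candidate island partition. -/
def CC (c₀ : ℕ) (S₀ : Set (Fin d → ℤ)) : Set (Set (Fin d → ℤ)) :=
  {A | island c₀ S₀ A}

end DRS

namespace DRS
variable {d : ℕ}

/-- closed `ℓ^∞` ball as a Finset. -/
noncomputable def ballF (x : Fin d → ℤ) (r : ℕ) : Finset (Fin d → ℤ) :=
  Fintype.piFinset fun j => Finset.Icc (x j - (r:ℤ)) (x j + (r:ℤ))

lemma mem_ballF {x y : Fin d → ℤ} {r : ℕ} : y ∈ ballF x r ↔ nd x y ≤ r := by
  rw [ballF, Fintype.mem_piFinset, nd_le_iff]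
  apply forall_congr'
  intro j
  rw [Finset.mem_Icc]
  omega

lemma card_ballF (x : Fin d → ℤ) (r : ℕ) : (ballF x r).card = (2*r+1)^d := by
  rw [ballF, Fintype.card_piFinset]
  have : ∀ j : Fin d, (Finset.Icc (x j - (r:ℤ)) (x j + (r:ℤ))).card = 2*r+1 := by
    intro j; rw [Int.card_Icc]; omega
  simp only [this, Finset.prod_const, Finset.card_univ, Fintype.card_fin]

lemma finite_of_bdd {A : Set (Fin d → ℤ)} {x : Fin d → ℤ} {r : ℕ}
    (h : ∀ y ∈ A, nd x y ≤ r) : A.Finite :=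
  Set.Finite.subset (ballF x r).finite_toSet (fun y hy => mem_ballF.mpr (h y hy))

/-- Upper bound on `diamd` from an `ℓ^∞` radius bound. -/
lemma diamd_le {A : Set (Fin d → ℤ)} {x : Fin d → ℤ} {r : ℕ}
    (h : ∀ y ∈ A, nd x y ≤ r) : diamd A ≤ 2*r+1 := by
  apply Nat.sInf_le
  refine ⟨fun j => x j - (r:ℤ), fun a ha j => ?_⟩
  have h2 : (x j - a j).natAbs ≤ r := nd_le_iff.mp (h a ha) j
  beta_reduce
  omega

/-- territory reach bound for islands of rank `n+1`. -/
lemma rho_bound {c₀ n : ℕ} (ρ : ℕ → ℕ) (hρ : ∀ l, ρ l ≤ c₀ * l + c₀)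
    {A : Set (Fin d → ℤ)} {x : Fin d → ℤ}
    (h : ∀ y ∈ A, nd x y ≤ av c₀ (n+1)) :
    ρ (diamd A) ≤ 3 * Kc c₀ * av c₀ (n+1) := by
  have h1 : diamd A ≤ 2 * av c₀ (n+1) + 1 := diamd_le h
  have h2 : ρ (diamd A) ≤ c₀ * (2 * av c₀ (n+1) + 1) + c₀ :=
    le_trans (hρ _) (by nlinarith)
  have h3 : 2 ≤ av c₀ (n+1) := two_le_av_succ c₀ n
  calc ρ (diamd A) ≤ c₀ * (2 * av c₀ (n+1) + 1) + c₀ := h2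
    _ ≤ 3 * Kc c₀ * av c₀ (n+1) := by unfold Kc; nlinarith

end DRS

namespace DRS
variable {d : ℕ}

section Islands
variable {c₀ : ℕ} {S₀ : Set (Fin d → ℤ)} {ρ : ℕ → ℕ}

lemma island_diam {n : ℕ} {x : Fin d → ℤ} (hsm : small c₀ (Slev c₀ S₀ n) (n+1) x) :
    ∀ y ∈ comp (Slev c₀ S₀ n) (bv c₀ (n+1)) x, nd x y ≤ av c₀ (n+1) := by
  intro y hy
  rcases hy with ⟨hx, hr⟩
  exact hsm x (mem_comp_self hx) y ⟨hx, hr⟩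

lemma island_not_next {n : ℕ} {x y : Fin d → ℤ} (hx : x ∈ Slev c₀ S₀ n)
    (hsm : small c₀ (Slev c₀ S₀ n) (n+1) x)
    (hy : y ∈ comp (Slev c₀ S₀ n) (bv c₀ (n+1)) x) : y ∉ Slev c₀ S₀ (n+1) := by
  intro hcon
  exact hcon.2 ((small_congr hy).mpr hsm)

lemma mem_territory_island {A : Set (Fin d → ℤ)} {u : Fin d → ℤ}
    (hu : u ∈ territory ρ A) : ∃ y ∈ A, nd u y ≤ ρ (diamd A) := by
  obtain ⟨a, ha, hle⟩ := hu
  refine ⟨a, ha, nd_le_iff.mpr fun j => ?_⟩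
  have h1 := hle j
  rw [abs_le] at h1
  omega

/-- Key separation: if `A` is an island of rank `n+1` and `B` any island with
rank at least that of `A`, `A ≠ B`, then `territory ρ A ∩ B = ∅`. -/
lemma territory_sep (hρ : ∀ l, ρ l ≤ c₀ * l + c₀)
    {A B : Set (Fin d → ℤ)} {n m : ℕ} {x z : Fin d → ℤ}
    (hnm : n ≤ m)
    (hxn : x ∈ Slev c₀ S₀ n) (hsmx : small c₀ (Slev c₀ S₀ n) (n+1) x)
    (hA : A = comp (Slev c₀ S₀ n) (bv c₀ (n+1)) x)
    (hzm : z ∈ Slev c₀ S₀ m) (hsmz : small c₀ (Slev c₀ S₀ m) (m+1) z)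
    (hB : B = comp (Slev c₀ S₀ m) (bv c₀ (m+1)) z)
    (hAB : A ≠ B) : territory ρ A ∩ B = ∅ := by
  rw [Set.eq_empty_iff_forall_notMem]
  rintro u ⟨hut, huB⟩
  -- u is within the territory radius of some y ∈ A
  obtain ⟨y, hyA, hnd⟩ := mem_territory_island hut
  have hdiam : ∀ w ∈ A, nd x w ≤ av c₀ (n+1) := by
    intro w hw; exact island_diam hsmx w (hA ▸ hw)
  have hrho : ρ (diamd A) ≤ 3 * Kc c₀ * av c₀ (n+1) := rho_bound ρ hρ hdiam
  have hnd' : nd u y ≤ bv c₀ (n+1) := by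
    unfold bv
    have : 3 * Kc c₀ * av c₀ (n+1) ≤ 4 * Kc c₀ * av c₀ (n+1) := by nlinarith [one_le_Kc c₀, one_le_av c₀ (n+1)]
    omega
  -- u ∈ Slev n since B ⊆ Slev m ⊆ Slev n
  have huB' : u ∈ comp (Slev c₀ S₀ m) (bv c₀ (m+1)) z := hB ▸ huB
  have huSn : u ∈ Slev c₀ S₀ n := Slev_antitone c₀ S₀ hnm (comp_subset _ _ _ huB')
  -- hence u is absorbed into the component A
  have huA : u ∈ A := hA ▸ mem_comp_of_edge (hA ▸ hyA) huSn hnd'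
  -- now derive a contradiction
  rcases Nat.eq_or_lt_of_le hnm with rfl | hlt
  · -- same rank: components coincide
    apply hAB
    have e1 : comp (Slev c₀ S₀ n) (bv c₀ (n+1)) u = comp (Slev c₀ S₀ n) (bv c₀ (n+1)) x :=
      comp_eq_of_mem (hA ▸ huA)
    have e2 : comp (Slev c₀ S₀ n) (bv c₀ (n+1)) u = comp (Slev c₀ S₀ n) (bv c₀ (n+1)) z :=
      comp_eq_of_mem huB'
    rw [hA, hB, ← e1, ← e2]
  · -- u ∈ A is removed at level n+1, but u ∈ B ⊆ Slev m ⊆ Slev (n+1)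
    have h1 : u ∉ Slev c₀ S₀ (n+1) := island_not_next hxn hsmx (hA ▸ huA)
    exact h1 (Slev_antitone c₀ S₀ hlt (comp_subset _ _ _ huB'))

/-- Islands are pairwise disjoint. -/
lemma island_disjoint (hρ : ∀ l, ρ l ≤ c₀ * l + c₀) :
    (CC c₀ S₀ : Set (Set (Fin d → ℤ))).PairwiseDisjoint id := by
  intro A hA B hB hAB
  obtain ⟨n, x, hxn, hsmx, hAe⟩ := hA
  obtain ⟨m, z, hzm, hsmz, hBe⟩ := hB
  rw [Function.onFun, Set.disjoint_left]
  intro u huA huB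
  rcases Nat.le_total n m with h | h
  · have := territory_sep (ρ := ρ) hρ h hxn hsmx hAe hzm hsmz hBe hAB
    have huterr : u ∈ territory ρ A := ⟨u, huA, fun j => by simp⟩
    exact Set.eq_empty_iff_forall_notMem.mp this u ⟨huterr, huB⟩
  · have := territory_sep (ρ := ρ) hρ h hzm hsmz hBe hxn hsmx hAe (Ne.symm hAB)
    have huterr : u ∈ territory ρ B := ⟨u, huB, fun j => by simp⟩
    exact Set.eq_empty_iff_forall_notMem.mp this u ⟨huterr, huA⟩

end Islands
end DRS

namespace DRS
variable {d : ℕ}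

section Survive
variable {c₀ : ℕ} {S₀ : Set (Fin d → ℤ)}

/-- First-crossing lemma along a path. -/
lemma first_crossing {s : Set (Fin d → ℤ)} {b A : ℕ} {x w : Fin d → ℤ}
    (hr : Reach s b x w) (hfar : A < 2 * nd x w) :
    ∃ v, Reach s b x v ∧ A < 2 * nd x v ∧ 2 * nd x v ≤ A + 2 * b := by
  induction hr with
  | refl => rw [nd_self] at hfar; omega
  | @tail u w huv hedge ih =>
    by_cases hc : A < 2 * nd x u
    · exact ih hc
    · refine ⟨w, huv.tail hedge, hfar, ?_⟩
      have ht : nd x w ≤ nd x u + nd u w := nd_triangle x u w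
      have : nd u w ≤ b := hedge.2.2
      omega

/-- If `x` survives level `n+1`, there is a survivor of level `n` at controlled
distance from `x`. -/
lemma survive_step {n : ℕ} {x : Fin d → ℤ} (hx : x ∈ Slev c₀ S₀ (n+1)) :
    ∃ v ∈ Slev c₀ S₀ n, av c₀ (n+1) < 2 * nd x v ∧ nd x v ≤ 5 * Kc c₀ * av c₀ (n+1) := by
  obtain ⟨hxn, hns⟩ := hx
  unfold small at hns
  push_neg at hns
  obtain ⟨y, hy, z, hz, hyz⟩ := hns
  -- one of y, z is far from x
  have h1 : nd y x + nd x z ≥ nd y z := nd_triangle y x z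
  have hfar : ∃ w, w ∈ comp (Slev c₀ S₀ n) (bv c₀ (n+1)) x ∧ av c₀ (n+1) < 2 * nd x w := by
    by_cases hc : av c₀ (n+1) < 2 * nd x y
    · exact ⟨y, hy, hc⟩
    · refine ⟨z, hz, ?_⟩
      rw [nd_symm y x] at h1
      omega
  obtain ⟨w, hw, hwf⟩ := hfar
  obtain ⟨v, hv, hv1, hv2⟩ := first_crossing hw.2 hwf
  refine ⟨v, hv.mem_of_mem hxn, hv1, ?_⟩
  have hb : bv c₀ (n+1) = 4 * Kc c₀ * av c₀ (n+1) := rfl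
  have hK : 1 ≤ Kc c₀ := one_le_Kc c₀
  nlinarith [one_le_av c₀ (n+1)]

end Survive
end DRS

namespace DRS
variable {d : ℕ}

/-- Cumulative distance scales. -/
def Dv (c₀ : ℕ) : ℕ → ℕ
  | 0 => 0
  | n+1 => 5 * Kc c₀ * av c₀ (n+1) + Dv c₀ n

lemma Dv_le (c₀ n : ℕ) : Dv c₀ n ≤ 10 * Kc c₀ * av c₀ n := by
  induction n with
  | zero => simp [Dv]
  | succ n ih =>
    have h1 : av c₀ n * 2 ≤ av c₀ (n+1) := by
      rw [av_succ]; nlinarith [two_le_Lam c₀, one_le_av c₀ n]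
    unfold Dv
    nlinarith [one_le_Kc c₀]

lemma Dv_mono {c₀ : ℕ} {m n : ℕ} (h : m ≤ n) : Dv c₀ m ≤ Dv c₀ n := by
  induction n with
  | zero => cases Nat.le_zero.mp h; exact le_refl _
  | succ n ih =>
    rcases Nat.eq_or_lt_of_le h with rfl | h'
    · exact le_refl _
    · calc Dv c₀ m ≤ Dv c₀ n := ih (by omega)
        _ ≤ Dv c₀ (n+1) := by rw [show Dv c₀ (n+1) = 5 * Kc c₀ * av c₀ (n+1) + Dv c₀ n from rfl]; omega

lemma av_ge_Dv (c₀ n : ℕ) : 4 * Dv c₀ n + 1 ≤ av c₀ (n+1) := by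
  have h1 := Dv_le c₀ n
  have h2 : av c₀ (n+1) = 64 * (c₀+1) * av c₀ n := by rw [av_succ]; rfl
  have h3 : Kc c₀ = c₀ + 1 := rfl
  nlinarith [one_le_av c₀ n, one_le_Kc c₀]

/-- The candidate configuration family. -/
noncomputable def Fam (c₀ : ℕ) : ℕ → (Fin d → ℤ) → Finset (Finset (Fin d → ℤ))
  | 0, x => {{x}}
  | n+1, x =>
      ((ballF x (5 * Kc c₀ * av c₀ (n+1))).filter
         (fun v => av c₀ (n+1) < 2 * nd x v)).biUnion fun v =>
        (Fam c₀ n x).biUnion fun I => (Fam c₀ n v).image fun J => I ∪ J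

lemma Fam_spec (c₀ : ℕ) : ∀ (n : ℕ) (x : Fin d → ℤ), ∀ I ∈ Fam c₀ n x,
    I.card = 2^n ∧ ∀ y ∈ I, nd x y ≤ Dv c₀ n := by
  intro n
  induction n with
  | zero =>
    intro x I hI
    simp only [Fam, Finset.mem_singleton] at hI
    subst hI
    refine ⟨by simp, fun y hy => ?_⟩
    simp only [Finset.mem_singleton] at hy
    subst hy
    simp [nd_self, Dv]
  | succ n ih =>
    intro x I hI
    simp only [Fam, Finset.mem_biUnion, Finset.mem_image, Finset.mem_filter, mem_ballF] at hI
    obtain ⟨v, ⟨hvball, hvfar⟩, I₁, hI₁, J₁, hJ₁, rfl⟩ := hI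
    obtain ⟨hc1, hr1⟩ := ih x I₁ hI₁
    obtain ⟨hc2, hr2⟩ := ih v J₁ hJ₁
    have hdisj : Disjoint I₁ J₁ := by
      rw [Finset.disjoint_left]
      intro y hy1 hy2
      have h1 : nd x y ≤ Dv c₀ n := hr1 y hy1
      have h2 : nd v y ≤ Dv c₀ n := hr2 y hy2
      have h3 : nd x v ≤ nd x y + nd y v := nd_triangle x y v
      rw [nd_symm y v] at h3
      have h4 := av_ge_Dv c₀ n
      omega
    constructor
    · rw [Finset.card_union_of_disjoint hdisj, hc1, hc2]
      ring
    · intro y hy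
      rcases Finset.mem_union.mp hy with h | h
      · calc nd x y ≤ Dv c₀ n := hr1 y h
          _ ≤ Dv c₀ (n+1) := Dv_mono (by omega)
      · calc nd x y ≤ nd x v + nd v y := nd_triangle x v y
          _ ≤ 5 * Kc c₀ * av c₀ (n+1) + Dv c₀ n := by
              have := hr2 y h; omega
          _ = Dv c₀ (n+1) := rfl

/-- Every survivor of level `n` carries a configuration from the family inside `S₀`. -/
lemma config (c₀ : ℕ) (S₀ : Set (Fin d → ℤ)) : ∀ (n : ℕ) (x : Fin d → ℤ),
    x ∈ Slev c₀ S₀ n → ∃ I ∈ Fam c₀ n x, ↑I ⊆ S₀ := by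
  intro n
  induction n with
  | zero =>
    intro x hx
    exact ⟨{x}, by simp [Fam], by simpa [Slev] using hx⟩
  | succ n ih =>
    intro x hx
    obtain ⟨I₁, hI₁, hI₁S⟩ := ih x hx.1
    obtain ⟨v, hv, hvfar, hvnear⟩ := survive_step hx
    obtain ⟨J₁, hJ₁, hJ₁S⟩ := ih v hv
    refine ⟨I₁ ∪ J₁, ?_, ?_⟩
    · simp only [Fam, Finset.mem_biUnion, Finset.mem_image, Finset.mem_filter, mem_ballF]
      exact ⟨v, ⟨hvnear, hvfar⟩, I₁, hI₁, J₁, hJ₁, rfl⟩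
    · intro y hy
      rcases Finset.mem_union.mp hy with h | h
      · exact hI₁S h
      · exact hJ₁S h

/-- Size bound for the family. -/
def Fcard (c₀ d : ℕ) : ℕ → ℕ
  | 0 => 1
  | n+1 => (2 * (5 * Kc c₀ * av c₀ (n+1)) + 1)^d * (Fcard c₀ d n * Fcard c₀ d n)

lemma Fam_card (c₀ : ℕ) : ∀ (n : ℕ) (x : Fin d → ℤ), (Fam c₀ n x).card ≤ Fcard c₀ d n := by
  intro n
  induction n with
  | zero => intro x; simp [Fam, Fcard]
  | succ n ih =>
    intro x
    calc (Fam c₀ (n+1) x).card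
        ≤ ∑ v ∈ (ballF x (5 * Kc c₀ * av c₀ (n+1))).filter
            (fun v => av c₀ (n+1) < 2 * nd x v),
            ((Fam c₀ n x).biUnion fun I => (Fam c₀ n v).image fun J => I ∪ J).card :=
          Finset.card_biUnion_le
      _ ≤ ∑ v ∈ (ballF x (5 * Kc c₀ * av c₀ (n+1))).filter
            (fun v => av c₀ (n+1) < 2 * nd x v),
            (Fcard c₀ d n * Fcard c₀ d n) := by
          apply Finset.sum_le_sum
          intro v hv
          calc ((Fam c₀ n x).biUnion fun I => (Fam c₀ n v).image fun J => I ∪ J).card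
              ≤ ∑ I ∈ Fam c₀ n x, ((Fam c₀ n v).image fun J => I ∪ J).card :=
                Finset.card_biUnion_le
            _ ≤ ∑ I ∈ Fam c₀ n x, Fcard c₀ d n := by
                apply Finset.sum_le_sum
                intro I hI
                exact le_trans (Finset.card_image_le) (ih v)
            _ ≤ Fcard c₀ d n * Fcard c₀ d n := by
                rw [Finset.sum_const, smul_eq_mul]
                exact Nat.mul_le_mul_right _ (ih x)
      _ ≤ (ballF x (5 * Kc c₀ * av c₀ (n+1))).card * (Fcard c₀ d n * Fcard c₀ d n) := by
          rw [Finset.sum_const, smul_eq_mul]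
          exact Nat.mul_le_mul_right _ (Finset.card_filter_le _ _)
      _ = Fcard c₀ d (n+1) := by rw [card_ballF]; rfl

end DRS

namespace DRS
variable {d : ℕ}

def Wv (c₀ d : ℕ) : ℕ := (11 * Kc c₀)^d * Lam c₀ ^ (6*d)

lemma one_le_Wv (c₀ d : ℕ) : 1 ≤ Wv c₀ d := by
  unfold Wv
  have h1 : 1 ≤ (11 * Kc c₀)^d := Nat.one_le_pow _ _ (by have := one_le_Kc c₀; omega)
  have h2 : 1 ≤ Lam c₀ ^ (6*d) := Nat.one_le_pow _ _ (by have := two_le_Lam c₀; omega)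
  nlinarith

lemma Fcard_le_aux (c₀ d : ℕ) : ∀ n, Fcard c₀ d n * Lam c₀ ^ (2*d*(n+2)) ≤ Wv c₀ d ^ (2^n) := by
  have hL : 1 ≤ Lam c₀ := by have := two_le_Lam c₀; omega
  intro n
  induction n with
  | zero =>
    have h1 : Lam c₀ ^ (2*d*2) ≤ Lam c₀ ^ (6*d) := Nat.pow_le_pow_right hL (by omega)
    have h2 : 1 ≤ (11 * Kc c₀)^d := Nat.one_le_pow _ _ (by have := one_le_Kc c₀; omega)
    calc Fcard c₀ d 0 * Lam c₀ ^ (2*d*(0+2)) = Lam c₀ ^ (2*d*2) := by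
          rw [show Fcard c₀ d 0 = 1 from rfl]; ring
      _ ≤ Wv c₀ d := by
          unfold Wv
          calc Lam c₀ ^ (2*d*2) ≤ Lam c₀ ^ (6*d) := h1
            _ ≤ (11 * Kc c₀)^d * Lam c₀ ^ (6*d) := Nat.le_mul_of_pos_left _ (by omega)
      _ = Wv c₀ d ^ (2^0) := by norm_num
  | succ n ih =>
    have hV : (2 * (5 * Kc c₀ * av c₀ (n+1)) + 1)^d ≤ Lam c₀ ^ (d*(n+2)) := by
      have hbase : 2 * (5 * Kc c₀ * av c₀ (n+1)) + 1 ≤ Lam c₀ ^ (n+2) := by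
        have h1 : 1 ≤ Kc c₀ * av c₀ (n+1) := by
          have := one_le_Kc c₀; have := one_le_av c₀ (n+1); nlinarith
        have h2 : av c₀ (n+1) = Lam c₀ ^ (n+1) := rfl
        have h3 : Lam c₀ ^ (n+2) = Lam c₀ * Lam c₀ ^ (n+1) := by ring
        have h4 : Lam c₀ = 64 * Kc c₀ := rfl
        nlinarith [one_le_Kc c₀, Nat.one_le_pow (n+1) (Lam c₀) (by omega)]
      calc (2 * (5 * Kc c₀ * av c₀ (n+1)) + 1)^d ≤ (Lam c₀ ^ (n+2))^d :=
            Nat.pow_le_pow_left hbase d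
        _ = Lam c₀ ^ (d*(n+2)) := by rw [← pow_mul, Nat.mul_comm]
    have key : Fcard c₀ d (n+1) * Lam c₀ ^ (2*d*(n+3)) ≤
        (Fcard c₀ d n * Lam c₀ ^ (2*d*(n+2)))^2 := by
      have e1 : Fcard c₀ d (n+1) = (2 * (5 * Kc c₀ * av c₀ (n+1)) + 1)^d *
          (Fcard c₀ d n * Fcard c₀ d n) := rfl
      have e2 : (Fcard c₀ d n * Lam c₀ ^ (2*d*(n+2)))^2 =
          Lam c₀ ^ (4*d*(n+2)) * (Fcard c₀ d n * Fcard c₀ d n) := by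
        rw [mul_pow, ← pow_mul]; ring_nf
      have e3 : Lam c₀ ^ (d*(n+2)) * Lam c₀ ^ (2*d*(n+3)) ≤ Lam c₀ ^ (4*d*(n+2)) := by
        rw [← pow_add]
        exact Nat.pow_le_pow_right hL (by ring_nf; omega)
      rw [e1, e2]
      calc (2 * (5 * Kc c₀ * av c₀ (n+1)) + 1)^d * (Fcard c₀ d n * Fcard c₀ d n) *
            Lam c₀ ^ (2*d*(n+3))
          ≤ Lam c₀ ^ (d*(n+2)) * (Fcard c₀ d n * Fcard c₀ d n) * Lam c₀ ^ (2*d*(n+3)) := by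
            exact Nat.mul_le_mul_right _ (Nat.mul_le_mul_right _ hV)
        _ = (Lam c₀ ^ (d*(n+2)) * Lam c₀ ^ (2*d*(n+3))) * (Fcard c₀ d n * Fcard c₀ d n) := by
            ring
        _ ≤ Lam c₀ ^ (4*d*(n+2)) * (Fcard c₀ d n * Fcard c₀ d n) :=
            Nat.mul_le_mul_right _ e3
    calc Fcard c₀ d (n+1) * Lam c₀ ^ (2*d*(n+1+2)) ≤
          (Fcard c₀ d n * Lam c₀ ^ (2*d*(n+2)))^2 := key
      _ ≤ (Wv c₀ d ^ (2^n))^2 := Nat.pow_le_pow_left ih 2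
      _ = Wv c₀ d ^ (2^(n+1)) := by rw [← pow_mul, pow_succ]

lemma Fcard_le (c₀ d : ℕ) (n : ℕ) : Fcard c₀ d n ≤ Wv c₀ d ^ (2^n) := by
  have h := Fcard_le_aux c₀ d n
  have h2 : 1 ≤ Lam c₀ ^ (2*d*(n+2)) :=
    Nat.one_le_pow _ _ (by have := two_le_Lam c₀; omega)
  nlinarith

end DRS

namespace DRS
variable {d : ℕ}

section Deterministic
variable {c₀ : ℕ} {S₀ : Set (Fin d → ℤ)} {ρ : ℕ → ℕ}

def good1 (c₀ : ℕ) (S₀ : Set (Fin d → ℤ)) : Prop := ∀ x, ∃ n, x ∉ Slev c₀ S₀ n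

def good2 (c₀ : ℕ) (S₀ : Set (Fin d → ℤ)) : Prop :=
  ∀ k, ∃ N, ∀ n, N ≤ n → ∀ y ∈ Slev c₀ S₀ n, ¬ (nd k y ≤ 3 * Kc c₀ * av c₀ (n+1))

open scoped Classical in
theorem main_det (hρ : ∀ l, ρ l ≤ c₀ * l + c₀) (h1 : good1 c₀ S₀) (h2 : good2 c₀ S₀) :
    IsIslandPartition ρ (CC c₀ S₀) S₀ := by
  refine ⟨?_, island_disjoint (ρ := ρ) hρ, ?_, ?_, ?_⟩
  · -- finite and nonempty
    rintro A ⟨n, x, hxn, hsm, rfl⟩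
    exact ⟨finite_of_bdd (island_diam hsm), ⟨x, mem_comp_self hxn⟩⟩
  · -- union is S₀
    apply Set.eq_of_subset_of_subset
    · rintro u ⟨A, ⟨n, x, hxn, hsm, rfl⟩, huA⟩
      exact Slev_antitone c₀ S₀ (Nat.zero_le n) (comp_subset _ _ _ huA)
    · intro u hu
      have hex : ∃ n, u ∉ Slev c₀ S₀ n := h1 u
      obtain ⟨m, hm⟩ : ∃ m, Nat.find hex = m + 1 := by
        have hs := Nat.find_spec hex
        rcases h : Nat.find hex with _ | m
        · rw [h] at hs; exact absurd hu hs
        · exact ⟨m, rfl⟩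
      have hmem : u ∈ Slev c₀ S₀ m := by
        by_contra hc
        exact Nat.find_min hex (by omega) hc
      have hspec : u ∉ Slev c₀ S₀ (m+1) := hm ▸ Nat.find_spec hex
      have hsm : small c₀ (Slev c₀ S₀ m) (m+1) u := by
        by_contra hc
        exact hspec ⟨hmem, hc⟩
      exact ⟨comp (Slev c₀ S₀ m) (bv c₀ (m+1)) u, ⟨m, u, hmem, hsm, rfl⟩,
        mem_comp_self hmem⟩
  · -- separation
    rintro A ⟨n, x, hxn, hsmx, hAe⟩ B ⟨m, z, hzm, hsmz, hBe⟩ hAB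
    rcases Nat.le_total n m with h | h
    · exact Or.inr (territory_sep hρ h hxn hsmx hAe hzm hsmz hBe hAB)
    · left
      rw [Set.inter_comm]
      exact territory_sep hρ h hzm hsmz hBe hxn hsmx hAe (Ne.symm hAB)
  · -- thinness
    intro k
    obtain ⟨N, hN⟩ := h2 k
    apply Set.Finite.subset
      (Set.Finite.biUnion (Set.finite_Iio N)
        (fun n _ => Set.Finite.finite_subsets (ballF k (4 * Kc c₀ * av c₀ (n+1))).finite_toSet))
    rintro A ⟨⟨n, x, hxn, hsm, hAe⟩, hterr⟩
    obtain ⟨y, hyA, hnd⟩ := mem_territory_island hterr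
    have hdiam : ∀ w ∈ A, nd x w ≤ av c₀ (n+1) := fun w hw => island_diam hsm w (hAe ▸ hw)
    have hrho : ρ (diamd A) ≤ 3 * Kc c₀ * av c₀ (n+1) := rho_bound ρ hρ hdiam
    have hyS : y ∈ Slev c₀ S₀ n := comp_subset _ _ _ (hAe ▸ hyA)
    have hnle : n < N := by
      by_contra hc
      exact hN n (by omega) y hyS (by omega)
    refine Set.mem_biUnion hnle ?_
    intro w hw
    rw [Finset.mem_coe, mem_ballF]
    have h3 : nd y w ≤ av c₀ (n+1) := by
      have hyc : y ∈ comp (Slev c₀ S₀ n) (bv c₀ (n+1)) x := hAe ▸ hyA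
      have hwc : w ∈ comp (Slev c₀ S₀ n) (bv c₀ (n+1)) x := hAe ▸ hw
      exact hsm y hyc w hwc
    have h4 : nd k w ≤ nd k y + nd y w := nd_triangle k y w
    have h6 : nd k y ≤ 3 * Kc c₀ * av c₀ (n+1) := le_trans hnd hrho
    calc nd k w ≤ nd k y + nd y w := h4
      _ ≤ 3 * Kc c₀ * av c₀ (n+1) + av c₀ (n+1) := by omega
      _ ≤ 4 * Kc c₀ * av c₀ (n+1) := by nlinarith [one_le_Kc c₀, one_le_av c₀ (n+1)]

end Deterministic
end DRS

namespace DRS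
variable {d : ℕ}

section Prob
variable {Ω : Type} [MeasurableSpace Ω] (P : Measure Ω) (S : Ω → Set (Fin d → ℤ))
  (c₀ : ℕ) (ε : ℝ)
  (hS : ∀ I : Finset (Fin d → ℤ), P {ω | ↑I ⊆ S ω} ≤ ENNReal.ofReal ε ^ I.card)

include hS

lemma P_Plev (n : ℕ) (x : Fin d → ℤ) :
    P {ω | x ∈ Slev c₀ (S ω) n} ≤ (Fcard c₀ d n : ℝ≥0∞) * ENNReal.ofReal ε ^ (2^n) := by
  have hsub : {ω | x ∈ Slev c₀ (S ω) n} ⊆ ⋃ I ∈ Fam c₀ n x, {ω | ↑I ⊆ S ω} := by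
    intro ω hω
    obtain ⟨I, hI, hIS⟩ := config c₀ (S ω) n x hω
    exact Set.mem_biUnion hI hIS
  calc P {ω | x ∈ Slev c₀ (S ω) n} ≤ P (⋃ I ∈ Fam c₀ n x, {ω | ↑I ⊆ S ω}) :=
        measure_mono hsub
    _ ≤ ∑ I ∈ Fam c₀ n x, P {ω | ↑I ⊆ S ω} := measure_biUnion_finset_le _ _
    _ ≤ ∑ J ∈ Fam c₀ n x, ENNReal.ofReal ε ^ (2^n) := by
        apply Finset.sum_le_sum; intro I hI
        have h := hS I
        rwa [(Fam_spec c₀ n x I hI).1] at h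
    _ = ((Fam c₀ n x).card : ℝ≥0∞) * ENNReal.ofReal ε ^ (2^n) := by
        rw [Finset.sum_const, nsmul_eq_mul]
    _ ≤ (Fcard c₀ d n : ℝ≥0∞) * ENNReal.ofReal ε ^ (2^n) := by
        gcongr
        exact_mod_cast Fam_card c₀ n x

lemma P_Elev (n : ℕ) (k : Fin d → ℤ) :
    P {ω | ∃ y ∈ Slev c₀ (S ω) n, nd k y ≤ 3 * Kc c₀ * av c₀ (n+1)} ≤
      (((7 * Kc c₀ * Lam c₀)^d : ℕ) : ℝ≥0∞) *
        ((((Lam c₀^d * Wv c₀ d : ℕ)) : ℝ≥0∞) * ENNReal.ofReal ε) ^ (2^n) := by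
  set R := 3 * Kc c₀ * av c₀ (n+1) with hR
  have hsub : {ω | ∃ y ∈ Slev c₀ (S ω) n, nd k y ≤ R} ⊆
      ⋃ y ∈ ballF k R, {ω | y ∈ Slev c₀ (S ω) n} := by
    rintro ω ⟨y, hy, hnd⟩
    exact Set.mem_biUnion (mem_ballF.mpr hnd) hy
  have hcard : ((ballF k R).card : ℝ≥0∞) ≤
      (((7 * Kc c₀ * Lam c₀)^d : ℕ) : ℝ≥0∞) * (((Lam c₀^d : ℕ) : ℝ≥0∞))^n := by
    have h1 : (ballF k R).card = (2*R+1)^d := card_ballF k R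
    have h2 : 2*R+1 ≤ 7 * Kc c₀ * Lam c₀ * Lam c₀ ^ n := by
      have h3 : av c₀ (n+1) = Lam c₀ * Lam c₀ ^ n := by
        rw [av_succ]; rfl
      have h4 : 1 ≤ Kc c₀ * (Lam c₀ * Lam c₀ ^ n) := by
        have := one_le_Kc c₀
        have h5 : 1 ≤ Lam c₀ * Lam c₀ ^ n := by
          have := two_le_Lam c₀
          have := Nat.one_le_pow n (Lam c₀) (by omega)
          nlinarith
        nlinarith
      rw [hR, h3]
      nlinarith
    have h6 : (ballF k R).card ≤ (7 * Kc c₀ * Lam c₀)^d * (Lam c₀^d)^n := by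
      rw [h1]
      calc (2*R+1)^d ≤ (7 * Kc c₀ * Lam c₀ * Lam c₀ ^ n)^d := Nat.pow_le_pow_left h2 d
        _ = (7 * Kc c₀ * Lam c₀)^d * (Lam c₀^n)^d := mul_pow _ _ d
        _ = (7 * Kc c₀ * Lam c₀)^d * (Lam c₀^d)^n := by
            rw [← pow_mul, ← pow_mul, Nat.mul_comm n d]
    calc ((ballF k R).card : ℝ≥0∞) ≤ (((7 * Kc c₀ * Lam c₀)^d * (Lam c₀^d)^n : ℕ) : ℝ≥0∞) :=
          Nat.cast_le.mpr h6
      _ = _ := by push_cast; ring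
  calc P {ω | ∃ y ∈ Slev c₀ (S ω) n, nd k y ≤ R}
      ≤ P (⋃ y ∈ ballF k R, {ω | y ∈ Slev c₀ (S ω) n}) := measure_mono hsub
    _ ≤ ∑ y ∈ ballF k R, P {ω | y ∈ Slev c₀ (S ω) n} := measure_biUnion_finset_le _ _
    _ ≤ ∑ z ∈ ballF k R, (Fcard c₀ d n : ℝ≥0∞) * ENNReal.ofReal ε ^ (2^n) :=
        Finset.sum_le_sum fun y _ => P_Plev P S c₀ ε hS n y
    _ = ((ballF k R).card : ℝ≥0∞) * ((Fcard c₀ d n : ℝ≥0∞) * ENNReal.ofReal ε ^ (2^n)) := by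
        rw [Finset.sum_const, nsmul_eq_mul]
    _ ≤ ((((7 * Kc c₀ * Lam c₀)^d : ℕ)) : ℝ≥0∞) * (((Lam c₀^d : ℕ) : ℝ≥0∞))^n *
          ((Wv c₀ d : ℝ≥0∞)^(2^n) * ENNReal.ofReal ε ^ (2^n)) := by
        have hF : (Fcard c₀ d n : ℝ≥0∞) ≤ (Wv c₀ d : ℝ≥0∞)^(2^n) := by
          exact_mod_cast Fcard_le c₀ d n
        exact mul_le_mul' hcard (mul_le_mul' hF le_rfl)
    _ ≤ (((7 * Kc c₀ * Lam c₀)^d : ℕ) : ℝ≥0∞) *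
          ((((Lam c₀^d * Wv c₀ d : ℕ)) : ℝ≥0∞) * ENNReal.ofReal ε) ^ (2^n) := by
        have hbase : (1:ℝ≥0∞) ≤ ((Lam c₀^d : ℕ) : ℝ≥0∞) := by
          exact_mod_cast Nat.one_le_pow _ _ (by have := two_le_Lam c₀; omega)
        have hmono : (((Lam c₀^d : ℕ) : ℝ≥0∞))^n ≤ (((Lam c₀^d : ℕ) : ℝ≥0∞))^(2^n) :=
          pow_le_pow_right₀ hbase (Nat.le_of_lt (Nat.lt_two_pow_self))
        have e : ((((Lam c₀^d * Wv c₀ d : ℕ)) : ℝ≥0∞) * ENNReal.ofReal ε) ^ (2^n) =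
            (((Lam c₀^d : ℕ) : ℝ≥0∞))^(2^n) *
              ((Wv c₀ d : ℝ≥0∞)^(2^n) * ENNReal.ofReal ε ^ (2^n)) := by
          rw [← mul_pow, ← mul_pow]
          congr 1
          push_cast
          ring
        calc (((7 * Kc c₀ * Lam c₀)^d : ℕ) : ℝ≥0∞) * (((Lam c₀^d : ℕ) : ℝ≥0∞))^n *
              ((Wv c₀ d : ℝ≥0∞)^(2^n) * ENNReal.ofReal ε ^ (2^n))
            = (((7 * Kc c₀ * Lam c₀)^d : ℕ) : ℝ≥0∞) * ((((Lam c₀^d : ℕ) : ℝ≥0∞))^n *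
              ((Wv c₀ d : ℝ≥0∞)^(2^n) * ENNReal.ofReal ε ^ (2^n))) := mul_assoc _ _ _
          _ ≤ (((7 * Kc c₀ * Lam c₀)^d : ℕ) : ℝ≥0∞) * ((((Lam c₀^d : ℕ) : ℝ≥0∞))^(2^n) *
              ((Wv c₀ d : ℝ≥0∞)^(2^n) * ENNReal.ofReal ε ^ (2^n))) :=
              mul_le_mul' le_rfl (mul_le_mul' hmono le_rfl)
          _ = _ := by rw [e]

end Prob
end DRS

namespace DRS
variable {d : ℕ}

lemma terr_to_Slev {c₀ : ℕ} {S₀ : Set (Fin d → ℤ)} {ρ : ℕ → ℕ}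
    (hρ : ∀ l, ρ l ≤ c₀ * l + c₀) {k : Fin d → ℤ}
    (h : ∃ A ∈ CC c₀ S₀, k ∈ territory ρ A) :
    ∃ n, ∃ y ∈ Slev c₀ S₀ n, nd k y ≤ 3 * Kc c₀ * av c₀ (n+1) := by
  obtain ⟨A, ⟨n, x, hxn, hsm, hAe⟩, hterr⟩ := h
  obtain ⟨y, hyA, hnd⟩ := mem_territory_island hterr
  have hdiam : ∀ w ∈ A, nd x w ≤ av c₀ (n+1) := fun w hw => island_diam hsm w (hAe ▸ hw)
  have hrho : ρ (diamd A) ≤ 3 * Kc c₀ * av c₀ (n+1) := rho_bound ρ hρ hdiam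
  exact ⟨n, y, comp_subset _ _ _ (hAe ▸ hyA), le_trans hnd hrho⟩

lemma tozero (x C : ℝ≥0∞) (hC : C ≠ ⊤) (h : ∀ N : ℕ, x ≤ C * 2⁻¹ ^ N) : x = 0 := by
  by_contra h0
  rcases eq_or_ne C 0 with rfl | hC0
  · simp only [zero_mul, nonpos_iff_eq_zero] at h
    exact h0 (h 0)
  · have hdiv : x / C ≠ 0 := by
      simp only [ne_eq, ENNReal.div_eq_zero_iff, not_or]
      exact ⟨h0, hC⟩
    obtain ⟨m, hm⟩ := ENNReal.exists_inv_two_pow_lt hdiv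
    have h1 : C * 2⁻¹ ^ m < C * (x / C) := by
      exact ENNReal.mul_lt_mul_right hC0 hC hm
    have h2 : C * (x / C) ≤ x := ENNReal.mul_div_le
    have := lt_of_le_of_lt (h m) (lt_of_lt_of_le h1 h2)
    exact lt_irrefl x this

end DRS


open DRS

/-- Linear sparseness of `ε`-random sets (Durand–Romashchenko–Shen): if
`ρ(ℓ) = O(ℓ)`, then for every `δ > 0` there is `ε > 0` such that every
`ε`-random subset of `ℤ^d` is almost surely `ρ`-sparse, and moreover admits
(almost surely) a partition into `ρ`-islands such that each fixed cell lies in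
the `ρ`-territory of some island with probability less than `δ`. -/
theorem stmt18 {d : ℕ} (hd : 1 ≤ d) (ρ : ℕ → ℕ) (c₀ : ℕ)
    (hρ : ∀ l : ℕ, ρ l ≤ c₀ * l + c₀) :
    ∀ δ : ℝ, 0 < δ → ∃ ε : ℝ, 0 < ε ∧
      ∀ (Ω : Type) (_ : MeasurableSpace Ω) (P : Measure Ω)
        (_ : IsProbabilityMeasure P)
        (S : Ω → Set (Fin d → ℤ)),
        (∀ i : Fin d → ℤ, MeasurableSet {ω | i ∈ S ω}) →
        (∀ I : Finset (Fin d → ℤ),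
          P {ω | ↑I ⊆ S ω} ≤ ENNReal.ofReal ε ^ I.card) →
        (∀ᵐ ω ∂P, Sparse ρ (S ω)) ∧
        ∃ C : Ω → Set (Set (Fin d → ℤ)),
          (∀ᵐ ω ∂P, IsIslandPartition ρ (C ω) (S ω)) ∧
          ∀ k : Fin d → ℤ,
            P {ω | ∃ A ∈ C ω, k ∈ territory ρ A} < ENNReal.ofReal δ := by
  intro δ hδ
  set U : ℕ := (7 * Kc c₀ * Lam c₀)^d with hU
  set N1 : ℕ := Lam c₀^d * Wv c₀ d with hN1
  set G : ℕ := 4 * U * N1 + 1 with hG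
  have hU1 : 1 ≤ U := Nat.one_le_pow _ _ (by have := one_le_Kc c₀; have := two_le_Lam c₀; positivity)
  have hN11 : 1 ≤ N1 := by
    have h1 : 1 ≤ Lam c₀^d := Nat.one_le_pow _ _ (by have := two_le_Lam c₀; omega)
    have h2 := one_le_Wv c₀ d
    calc 1 = 1*1 := rfl
      _ ≤ N1 := Nat.mul_le_mul h1 h2
  have hG4 : 4 * N1 ≤ G := by nlinarith
  have hG2U : 2 * U * N1 < G := by nlinarith
  have hG0 : (0:ℝ) < G := by positivity
  refine ⟨min δ 1 / G, by positivity, ?_⟩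
  intro Ω mΩ P hP S hmeas hS
  have hε0 : (0:ℝ) < min δ 1 / G := by positivity
  -- Basic real bounds
  have hhalf : (N1:ℝ) * (min δ 1 / G) ≤ 1/2 := by
    have h1 : min δ 1 ≤ 1 := min_le_right _ _
    have h2 : 0 ≤ min δ 1 := le_min hδ.le zero_le_one
    have h3 : (4:ℝ) * N1 ≤ G := by exact_mod_cast hG4
    have h4 : (1:ℝ) ≤ N1 := by exact_mod_cast hN11
    rw [← mul_div_assoc, div_le_iff₀ hG0]
    nlinarith
  -- ENNReal setup
  set ε' : ℝ≥0∞ := ENNReal.ofReal (min δ 1 / G) with hε'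
  set q : ℝ≥0∞ := (N1:ℝ≥0∞) * ε' with hqdef
  have hqofReal : q = ENNReal.ofReal ((N1:ℝ) * (min δ 1 / G)) := by
    rw [hqdef, hε', ENNReal.ofReal_mul (by positivity), ENNReal.ofReal_natCast]
  have hq2 : q ≤ 2⁻¹ := by
    rw [hqofReal]
    calc ENNReal.ofReal ((N1:ℝ) * (min δ 1 / G)) ≤ ENNReal.ofReal (1/2) :=
          ENNReal.ofReal_le_ofReal hhalf
      _ = 2⁻¹ := by
          rw [show (1:ℝ)/2 = (2:ℝ)⁻¹ by norm_num,
            ENNReal.ofReal_inv_of_pos (by norm_num)]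
          norm_num
  have hPlev : ∀ (n : ℕ) (x : Fin d → ℤ), P {ω | x ∈ Slev c₀ (S ω) n} ≤ q ^ 2^n := by
    intro n x
    calc P {ω | x ∈ Slev c₀ (S ω) n} ≤ (Fcard c₀ d n : ℝ≥0∞) * ε' ^ (2^n) :=
          DRS.P_Plev P S c₀ _ hS n x
      _ ≤ (Wv c₀ d : ℝ≥0∞)^(2^n) * ε' ^ (2^n) := by
          gcongr
          exact_mod_cast Fcard_le c₀ d n
      _ = ((Wv c₀ d : ℝ≥0∞) * ε')^(2^n) := (mul_pow _ _ _).symm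
      _ ≤ q ^ (2^n) := by
          gcongr
          rw [hqdef]
          gcongr
          have : Wv c₀ d ≤ N1 := by
            rw [hN1]
            exact Nat.le_mul_of_pos_left _
              (Nat.pos_of_ne_zero (by
                have : 1 ≤ Lam c₀^d := Nat.one_le_pow _ _ (by have := two_le_Lam c₀; omega)
                omega))
          exact_mod_cast this
  have hElev : ∀ (n : ℕ) (k : Fin d → ℤ),
      P {ω | ∃ y ∈ Slev c₀ (S ω) n, nd k y ≤ 3 * Kc c₀ * av c₀ (n+1)} ≤
        (U:ℝ≥0∞) * q ^ 2^n := by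
    intro n k
    exact DRS.P_Elev P S c₀ _ hS n k
  have htail : ∀ (k : Fin d → ℤ) (N : ℕ),
      (∑' j : ℕ, P {ω | ∃ y ∈ Slev c₀ (S ω) (N+j), nd k y ≤ 3*Kc c₀*av c₀ (N+j+1)}) ≤
        (U:ℝ≥0∞) * (2 * q) * 2⁻¹ ^ N := by
    intro k N
    have hstep : ∀ j : ℕ,
        P {ω | ∃ y ∈ Slev c₀ (S ω) (N+j), nd k y ≤ 3*Kc c₀*av c₀ (N+j+1)} ≤
          (U:ℝ≥0∞) * (q * (2⁻¹^N * 2⁻¹^j)) := by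
      intro j
      refine le_trans (hElev (N+j) k) (mul_le_mul' le_rfl ?_)
      calc q ^ 2^(N+j) ≤ q ^ (N+j+1) :=
            pow_le_pow_of_le_one zero_le (le_trans hq2 (by norm_num))
              (Nat.succ_le_of_lt (Nat.lt_two_pow_self))
        _ = q * (q^N * q^j) := by ring
        _ ≤ q * (2⁻¹^N * 2⁻¹^j) := by
            apply mul_le_mul' le_rfl
            exact mul_le_mul' (pow_le_pow_left' hq2 N) (pow_le_pow_left' hq2 j)
    calc (∑' j : ℕ, P {ω | ∃ y ∈ Slev c₀ (S ω) (N+j), nd k y ≤ 3*Kc c₀*av c₀ (N+j+1)})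
        ≤ ∑' j : ℕ, (U:ℝ≥0∞) * (q * (2⁻¹^N * 2⁻¹^j)) := ENNReal.tsum_le_tsum hstep
      _ = (U:ℝ≥0∞) * (q * (2⁻¹^N * ∑' j : ℕ, (2⁻¹:ℝ≥0∞)^j)) := by
          rw [ENNReal.tsum_mul_left, ENNReal.tsum_mul_left, ENNReal.tsum_mul_left]
      _ = (U:ℝ≥0∞) * (q * (2⁻¹^N * 2)) := by
          rw [ENNReal.tsum_geometric, ENNReal.one_sub_inv_two]
          norm_num
      _ = (U:ℝ≥0∞) * (2 * q) * 2⁻¹ ^ N := by ring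
  have hqne : q ≠ ⊤ := ne_top_of_le_ne_top (by norm_num) hq2
  have hCne : (U:ℝ≥0∞) * (2*q) ≠ ⊤ :=
    ENNReal.mul_ne_top (ENNReal.natCast_ne_top U) (ENNReal.mul_ne_top (by norm_num) hqne)
  have hsum_lt : (U:ℝ≥0∞) * (2 * q) < ENNReal.ofReal δ := by
    have he1 : (U:ℝ≥0∞) * (2 * q) =
        ENNReal.ofReal ((U:ℝ) * (2 * ((N1:ℝ) * (min δ 1 / G)))) := by
      rw [hqofReal,
        show ((U:ℕ):ℝ≥0∞) = ENNReal.ofReal ((U:ℕ):ℝ) from (ENNReal.ofReal_natCast U).symm,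
        show (2:ℝ≥0∞) = ENNReal.ofReal (2:ℝ) from by norm_num,
        ← ENNReal.ofReal_mul (by positivity), ← ENNReal.ofReal_mul (by positivity)]
    rw [he1, ENNReal.ofReal_lt_ofReal_iff hδ]
    have ht0 : 0 < min δ 1 / (G:ℝ) := hε0
    have htG : (min δ 1 / G) * G ≤ δ := by
      rw [div_mul_cancel₀ _ (ne_of_gt hG0)]
      exact min_le_left _ _
    have hcast : (2*U*N1:ℝ) + 1 ≤ G := by
      have : 2*U*N1 + 1 ≤ G := by omega
      exact_mod_cast this
    have hU0 : (1:ℝ) ≤ U := by exact_mod_cast hU1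
    have hN0 : (1:ℝ) ≤ N1 := by exact_mod_cast hN11
    nlinarith [mul_pos (mul_pos (show (0:ℝ) < 2*U*N1 by nlinarith) ht0) hG0]
  -- bad events
  have hbad1 : ∀ x : Fin d → ℤ, P (⋂ n, {ω | x ∈ Slev c₀ (S ω) n}) = 0 := by
    intro x
    apply tozero _ 1 (by norm_num)
    intro N
    rw [one_mul]
    calc P (⋂ n, {ω | x ∈ Slev c₀ (S ω) n}) ≤ P {ω | x ∈ Slev c₀ (S ω) N} :=
          measure_mono (Set.iInter_subset _ N)
      _ ≤ q^2^N := hPlev N x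
      _ ≤ (2⁻¹:ℝ≥0∞)^2^N := pow_le_pow_left' hq2 _
      _ ≤ (2⁻¹:ℝ≥0∞)^N :=
          pow_le_pow_of_le_one zero_le (by norm_num) (Nat.le_of_lt (Nat.lt_two_pow_self))
  have hbad2 : ∀ k : Fin d → ℤ,
      P (⋂ N, ⋃ j, {ω | ∃ y ∈ Slev c₀ (S ω) (N+j), nd k y ≤ 3*Kc c₀*av c₀ (N+j+1)}) = 0 := by
    intro k
    apply tozero _ ((U:ℝ≥0∞) * (2*q)) hCne
    intro N
    calc P (⋂ N, ⋃ j, {ω | ∃ y ∈ Slev c₀ (S ω) (N+j), nd k y ≤ 3*Kc c₀*av c₀ (N+j+1)})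
        ≤ P (⋃ j, {ω | ∃ y ∈ Slev c₀ (S ω) (N+j), nd k y ≤ 3*Kc c₀*av c₀ (N+j+1)}) :=
          measure_mono (Set.iInter_subset _ N)
      _ ≤ ∑' j, P {ω | ∃ y ∈ Slev c₀ (S ω) (N+j), nd k y ≤ 3*Kc c₀*av c₀ (N+j+1)} :=
          measure_iUnion_le _
      _ ≤ _ := htail k N
  set Bad : Set Ω := (⋃ x, ⋂ n, {ω | x ∈ Slev c₀ (S ω) n}) ∪
      ⋃ k, ⋂ N, ⋃ j, {ω | ∃ y ∈ Slev c₀ (S ω) (N+j), nd k y ≤ 3*Kc c₀*av c₀ (N+j+1)}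
    with hBadDef
  have hBad : P Bad = 0 := by
    rw [hBadDef]
    apply measure_union_null
    · exact measure_iUnion_null_iff.mpr hbad1
    · exact measure_iUnion_null_iff.mpr hbad2
  have hgood : ∀ ω, ω ∉ Bad → IsIslandPartition ρ (CC c₀ (S ω)) (S ω) := by
    intro ω hω
    rw [hBadDef] at hω
    simp only [Set.mem_union, Set.mem_iUnion, Set.mem_iInter, Set.mem_setOf_eq, not_or,
      not_exists, not_forall] at hω
    obtain ⟨hg1, hg2⟩ := hω
    apply main_det hρ
    · intro x
      exact hg1 x
    · intro k
      obtain ⟨N, hN⟩ := hg2 k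
      refine ⟨N, fun n hn y hy hnd => ?_⟩
      have h := hN (n - N)
      rw [Nat.add_sub_cancel' hn] at h
      exact h y ⟨hy, hnd⟩
  have hae : ∀ᵐ ω ∂P, IsIslandPartition ρ (CC c₀ (S ω)) (S ω) := by
    rw [MeasureTheory.ae_iff]
    apply measure_mono_null _ hBad
    intro ω hω
    by_contra hc
    exact hω (hgood ω hc)
  refine ⟨hae.mono fun ω h => ⟨_, h⟩, fun ω => CC c₀ (S ω), hae, ?_⟩
  intro k
  calc P {ω | ∃ A ∈ CC c₀ (S ω), k ∈ territory ρ A}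
      ≤ P (⋃ n, {ω | ∃ y ∈ Slev c₀ (S ω) (0+n), nd k y ≤ 3*Kc c₀*av c₀ (0+n+1)}) := by
        apply measure_mono
        intro ω hω
        obtain ⟨n, y, hy, hnd⟩ := terr_to_Slev hρ hω
        exact Set.mem_iUnion.mpr ⟨n, y, by simpa using hy, by simpa using hnd⟩
    _ ≤ ∑' n, P {ω | ∃ y ∈ Slev c₀ (S ω) (0+n), nd k y ≤ 3*Kc c₀*av c₀ (0+n+1)} :=
        measure_iUnion_le _
    _ ≤ (U:ℝ≥0∞) * (2*q) * 2⁻¹ ^ 0 := htail k 0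
    _ = (U:ℝ≥0∞) * (2*q) := by norm_num
    _ < ENNReal.ofReal δ := hsum_lt
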